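/- Given a jump kernel J(X, dY) = Σᵢ K(i|n) δ_{del(X,i)}(dY) where del deletes component i from an n-component state, and marginal densities p_t on each fixed-dimension stratum, the kernel K̂(Y, dX) ∝ p_t(X) K(i|n+1) δ_{ins(Y, y_add, i)}(X) satisfies the detailed flux equation E[1_A(X_t) J(X_t, B)] = E[1_B(X_t) K̂(X_t, A)] for all measurable sets A, B. -/

import Mathlib

open MeasureTheory
open scoped ENNReal

/-- The trans-dimensional state space `𝒳 = ⋃_{n=1}^N {n} × ℝ^{nd}`, realized as the
sigma type of tuples of `d`-dimensional components. -/
abbrev TransSpace (d : ℕ) := (n : ℕ) × (Fin n → EuclideanSpace ℝ (Fin d))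

lemma meas_sigmaMk' {α} {β : α → Type*} [∀ a, MeasurableSpace (β a)] (a : α) :
    Measurable (@Sigma.mk α β a) :=
  measurable_iff_le_map.2 (iInf_le _ a)

/-- Detailed flux equation: for the deletion jump kernel
`J(X, dY) = Σᵢ K(i|n) δ_{del(X,i)}(dY)` (where `del (n+1, x) i = (n, x ∘ i.succAbove)`
deletes the `i`-th component) and marginal densities `p_t` on each fixed-dimension
stratum, the kernel `K̂(Y, dX) ∝ p_t(X) K(i|n+1) δ_{ins(Y, y_add, i)}(X)` satisfies
`E[1_A(X_t) J(X_t, B)] = E[1_B(X_t) K̂(X_t, A)]` for all measurable sets `A, B`. -/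
theorem stmt_9 (d N : ℕ)
    (p : (n : ℕ) → (Fin n → EuclideanSpace ℝ (Fin d)) → ℝ)
    (hp_meas : ∀ n, Measurable (p n)) (hp_pos : ∀ n x, 0 < p n x)
    (K : (n : ℕ) → Fin n → ℝ)
    (hK0 : ∀ n i, 0 ≤ K n i) (hK1 : ∀ n, 1 ≤ n → ∑ i, K n i = 1)
    (A B : Set (TransSpace d)) (hA : MeasurableSet A) (hB : MeasurableSet B) :
    -- E[1_A(X_t) J(X_t, B)]
    (∑ n ∈ Finset.Icc 1 (N - 1),
      ∫⁻ x : Fin (n + 1) → EuclideanSpace ℝ (Fin d),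
        A.indicator (fun _ => (1 : ℝ≥0∞)) ⟨n + 1, x⟩ *
        (∑ i : Fin (n + 1), ENNReal.ofReal (K (n + 1) i) *
          B.indicator (fun _ => (1 : ℝ≥0∞)) ⟨n, fun j => x (i.succAbove j)⟩) *
        ENNReal.ofReal (p (n + 1) x))
    -- E[1_B(X_t) K̂(X_t, A)]
    = ∑ n ∈ Finset.Icc 1 (N - 1),
      ∫⁻ y : Fin n → EuclideanSpace ℝ (Fin d),
        B.indicator (fun _ => (1 : ℝ≥0∞)) ⟨n, y⟩ *
        ((∑ i : Fin (n + 1), ∫⁻ yadd : EuclideanSpace ℝ (Fin d),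
            A.indicator (fun _ => (1 : ℝ≥0∞)) ⟨n + 1, i.insertNth yadd y⟩ *
            ENNReal.ofReal (p (n + 1) (i.insertNth yadd y)) *
            ENNReal.ofReal (K (n + 1) i)) / ENNReal.ofReal (p n y)) *
        ENNReal.ofReal (p n y) := by
  classical
  refine Finset.sum_congr rfl fun n _ => ?_
  have hfA : ∀ m : ℕ, Measurable (fun x : Fin m → EuclideanSpace ℝ (Fin d) =>
      A.indicator (fun _ => (1 : ℝ≥0∞)) ⟨m, x⟩) :=
    fun m => measurable_const.indicator (meas_sigmaMk' m hA)
  have hfB : Measurable (fun y : Fin n → EuclideanSpace ℝ (Fin d) =>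
      B.indicator (fun _ => (1 : ℝ≥0∞)) ⟨n, y⟩) :=
    measurable_const.indicator (meas_sigmaMk' n hB)
  have hfB_ne_top : ∀ y : Fin n → EuclideanSpace ℝ (Fin d),
      B.indicator (fun _ => (1 : ℝ≥0∞)) ⟨n, y⟩ ≠ ⊤ := by
    intro y
    by_cases h : (⟨n, y⟩ : TransSpace d) ∈ B <;> simp [Set.indicator, h]
  have hins : ∀ i : Fin (n + 1),
      Measurable (fun z : EuclideanSpace ℝ (Fin d) × (Fin n → EuclideanSpace ℝ (Fin d)) =>
        (i.insertNth z.1 z.2 : Fin (n + 1) → EuclideanSpace ℝ (Fin d))) := by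
    intro i
    have := (MeasurableEquiv.piFinSuccAbove
      (fun _ : Fin (n + 1) => EuclideanSpace ℝ (Fin d)) i).symm.measurable
    simpa [MeasurableEquiv.piFinSuccAbove_symm_apply, Fin.insertNthEquiv] using this
  have hdel : ∀ i : Fin (n + 1),
      Measurable (fun x : Fin (n + 1) → EuclideanSpace ℝ (Fin d) =>
        (fun j => x (i.succAbove j))) := by
    intro i
    exact measurable_pi_iff.2 fun j => measurable_pi_apply _
  -- the key per-index identity
  have key : ∀ i : Fin (n + 1),
      (∫⁻ x : Fin (n + 1) → EuclideanSpace ℝ (Fin d),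
        A.indicator (fun _ => (1 : ℝ≥0∞)) ⟨n + 1, x⟩ *
          (ENNReal.ofReal (K (n + 1) i) *
            B.indicator (fun _ => (1 : ℝ≥0∞)) ⟨n, fun j => x (i.succAbove j)⟩) *
          ENNReal.ofReal (p (n + 1) x))
      = ∫⁻ y : Fin n → EuclideanSpace ℝ (Fin d),
          B.indicator (fun _ => (1 : ℝ≥0∞)) ⟨n, y⟩ *
          ∫⁻ yadd : EuclideanSpace ℝ (Fin d),
            A.indicator (fun _ => (1 : ℝ≥0∞)) ⟨n + 1, i.insertNth yadd y⟩ *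
            ENNReal.ofReal (p (n + 1) (i.insertNth yadd y)) *
            ENNReal.ofReal (K (n + 1) i) := by
    intro i
    set h : EuclideanSpace ℝ (Fin d) × (Fin n → EuclideanSpace ℝ (Fin d)) → ℝ≥0∞ :=
      fun z => A.indicator (fun _ => (1 : ℝ≥0∞)) ⟨n + 1, i.insertNth z.1 z.2⟩ *
        (ENNReal.ofReal (K (n + 1) i) * B.indicator (fun _ => (1 : ℝ≥0∞)) ⟨n, z.2⟩) *
        ENNReal.ofReal (p (n + 1) (i.insertNth z.1 z.2)) with hh_def
    have hh : Measurable h := by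
      apply Measurable.mul
      apply Measurable.mul
      · exact (hfA (n + 1)).comp (hins i)
      · exact measurable_const.mul (hfB.comp measurable_snd)
      · exact (ENNReal.measurable_ofReal.comp ((hp_meas (n + 1)).comp (hins i)))
    have mp := volume_preserving_piFinSuccAbove
      (fun _ : Fin (n + 1) => EuclideanSpace ℝ (Fin d)) i
    calc
      (∫⁻ x : Fin (n + 1) → EuclideanSpace ℝ (Fin d),
        A.indicator (fun _ => (1 : ℝ≥0∞)) ⟨n + 1, x⟩ *
          (ENNReal.ofReal (K (n + 1) i) *
            B.indicator (fun _ => (1 : ℝ≥0∞)) ⟨n, fun j => x (i.succAbove j)⟩) *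
          ENNReal.ofReal (p (n + 1) x))
          = ∫⁻ x, h ((MeasurableEquiv.piFinSuccAbove
              (fun _ : Fin (n + 1) => EuclideanSpace ℝ (Fin d)) i) x) := by
            refine lintegral_congr fun x => ?_
            simp only [hh_def, MeasurableEquiv.piFinSuccAbove_apply,
              Fin.insertNthEquiv_symm_apply, Fin.insertNth_self_removeNth, Fin.removeNth]
            rfl
      _ = ∫⁻ z, h z := mp.lintegral_comp hh
      _ = ∫⁻ y, ∫⁻ yadd, h (yadd, y) := by
            rw [MeasureTheory.Measure.volume_eq_prod]
            exact lintegral_prod_symm h hh.aemeasurable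
      _ = _ := by
            refine lintegral_congr fun y => ?_
            rw [← lintegral_const_mul' _ _ (hfB_ne_top y)]
            refine lintegral_congr fun yadd => ?_
            simp only [hh_def]
            ring
  -- left side: pull the sum out of the integral
  have hL : (∫⁻ x : Fin (n + 1) → EuclideanSpace ℝ (Fin d),
      A.indicator (fun _ => (1 : ℝ≥0∞)) ⟨n + 1, x⟩ *
      (∑ i : Fin (n + 1), ENNReal.ofReal (K (n + 1) i) *
        B.indicator (fun _ => (1 : ℝ≥0∞)) ⟨n, fun j => x (i.succAbove j)⟩) *
      ENNReal.ofReal (p (n + 1) x))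
      = ∑ i : Fin (n + 1), ∫⁻ x : Fin (n + 1) → EuclideanSpace ℝ (Fin d),
        A.indicator (fun _ => (1 : ℝ≥0∞)) ⟨n + 1, x⟩ *
          (ENNReal.ofReal (K (n + 1) i) *
            B.indicator (fun _ => (1 : ℝ≥0∞)) ⟨n, fun j => x (i.succAbove j)⟩) *
          ENNReal.ofReal (p (n + 1) x) := by
    rw [← lintegral_finset_sum]
    · refine lintegral_congr fun x => ?_
      rw [Finset.mul_sum, Finset.sum_mul]
    · intro i _
      apply Measurable.mul
      apply Measurable.mul
      · exact hfA (n + 1)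
      · exact measurable_const.mul (hfB.comp (hdel i))
      · exact ENNReal.measurable_ofReal.comp (hp_meas (n + 1))
  -- right side: cancel the density and pull the sum out
  have hq : ∀ y, ENNReal.ofReal (p n y) ≠ 0 ∧ ENNReal.ofReal (p n y) ≠ ⊤ := fun y =>
    ⟨by simp [ENNReal.ofReal_eq_zero, not_le, hp_pos n y], ENNReal.ofReal_ne_top⟩
  have hR : (∫⁻ y : Fin n → EuclideanSpace ℝ (Fin d),
      B.indicator (fun _ => (1 : ℝ≥0∞)) ⟨n, y⟩ *
      ((∑ i : Fin (n + 1), ∫⁻ yadd : EuclideanSpace ℝ (Fin d),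
          A.indicator (fun _ => (1 : ℝ≥0∞)) ⟨n + 1, i.insertNth yadd y⟩ *
          ENNReal.ofReal (p (n + 1) (i.insertNth yadd y)) *
          ENNReal.ofReal (K (n + 1) i)) / ENNReal.ofReal (p n y)) *
      ENNReal.ofReal (p n y))
      = ∑ i : Fin (n + 1), ∫⁻ y : Fin n → EuclideanSpace ℝ (Fin d),
          B.indicator (fun _ => (1 : ℝ≥0∞)) ⟨n, y⟩ *
          ∫⁻ yadd : EuclideanSpace ℝ (Fin d),
            A.indicator (fun _ => (1 : ℝ≥0∞)) ⟨n + 1, i.insertNth yadd y⟩ *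
            ENNReal.ofReal (p (n + 1) (i.insertNth yadd y)) *
            ENNReal.ofReal (K (n + 1) i) := by
    rw [← lintegral_finset_sum]
    · refine lintegral_congr fun y => ?_
      rw [mul_assoc, ENNReal.div_mul_cancel (hq y).1 (hq y).2, Finset.mul_sum]
    · intro i _
      refine hfB.mul ?_
      have hF : Measurable (fun z : EuclideanSpace ℝ (Fin d) × (Fin n → EuclideanSpace ℝ (Fin d)) =>
          A.indicator (fun _ => (1 : ℝ≥0∞)) ⟨n + 1, i.insertNth z.1 z.2⟩ *
          ENNReal.ofReal (p (n + 1) (i.insertNth z.1 z.2)) *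
          ENNReal.ofReal (K (n + 1) i)) := by
        apply Measurable.mul
        apply Measurable.mul
        · exact (hfA (n + 1)).comp (hins i)
        · exact ENNReal.measurable_ofReal.comp ((hp_meas (n + 1)).comp (hins i))
        · exact measurable_const
      exact hF.lintegral_prod_left'
  rw [hL, hR]
  exact Finset.sum_congr rfl fun i _ => key i
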